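/- The element a² = b⁻² generates the center of the Klein bottle group ⟨a, b ∣ a²b² = 1⟩, and this center is infinite cyclic. -/

import Mathlib

def kleinRels : Set (FreeGroup (Fin 2)) :=
  {FreeGroup.of 0 * FreeGroup.of 0 * FreeGroup.of 1 * FreeGroup.of 1}

/-- The Klein bottle group ⟨a, b ∣ a²b² = 1⟩. -/
abbrev KleinGroup := PresentedGroup kleinRels



open Multiplicative SemidirectProduct

noncomputable section KleinAux

/-- inversion automorphism of `Multiplicative ℤ` -/
def kIota : MulAut (Multiplicative ℤ) := MulEquiv.inv (Multiplicative ℤ)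

def kPhi : Multiplicative ℤ →* MulAut (Multiplicative ℤ) := zpowersHom _ kIota

abbrev KModel := Multiplicative ℤ ⋊[kPhi] Multiplicative ℤ

lemma kIota_apply (x : Multiplicative ℤ) : kIota x = x⁻¹ := rfl

lemma kIota_sq : kIota ^ (2:ℤ) = 1 := by
  ext x
  simp [zpow_two, pow_two, MulAut.mul_apply, kIota_apply]

lemma kPhi_apply (g m : Multiplicative ℤ) :
    kPhi g m = if Even g.toAdd then m else m⁻¹ := by
  have h : kPhi g = kIota ^ g.toAdd := rfl
  rcases Int.even_or_odd g.toAdd with ⟨n, hn⟩ | ⟨n, hn⟩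
  · have : kPhi g = 1 := by
      rw [h, hn, show n + n = 2 * n by ring, zpow_mul, kIota_sq, one_zpow]
    have he : Even g.toAdd := ⟨n, hn⟩
    rw [this]
    simp only [he, if_true]
    rfl
  · have : kPhi g = kIota := by
      rw [h, hn, zpow_add, zpow_one, show 2 * n = n + n by ring, zpow_add, ← zpow_add,
        show n + n = 2 * n by ring, zpow_mul, kIota_sq, one_zpow, one_mul]
    have ho : ¬ Even g.toAdd := by rw [hn]; exact Int.not_even_iff_odd.2 ⟨n, rfl⟩
    rw [this]
    simp only [ho, if_false]
    rfl

end KleinAux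

noncomputable section KleinAux2
open SemidirectProduct Multiplicative

def kc : KModel := inr (ofAdd 2)

lemma kc_zpow (j : ℤ) : kc ^ j = inr (ofAdd (2 * j)) := by
  rw [kc, ← map_zpow, Int.ofAdd_mul]

lemma kc_mem_center : kc ∈ Subgroup.center KModel := by
  rw [Subgroup.mem_center_iff]
  intro g
  ext
  · simp [kc, kPhi_apply]
  · simp [kc, mul_comm]

lemma center_KModel : Subgroup.center KModel = Subgroup.zpowers kc := by
  ext z
  constructor
  · intro hz
    rw [Subgroup.mem_center_iff] at hz
    have hy := congrArg SemidirectProduct.left (hz (inr (ofAdd 1)))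
    have hx := congrArg SemidirectProduct.left (hz (inl (ofAdd 1)))
    simp at hy hx
    rw [kPhi_apply] at hy hx
    rw [toAdd_ofAdd, if_neg (by decide : ¬ Even (1:ℤ))] at hy
    have hl : z.left = 1 := by
      have h := congrArg Multiplicative.toAdd hy
      simp at h
      have h0 : z.left.toAdd = 0 := by omega
      rw [← ofAdd_toAdd z.left, h0]; rfl
    have he : Even z.right.toAdd := by
      by_contra hne
      rw [if_neg hne] at hx
      have := congrArg Multiplicative.toAdd hx
      simp at this
      omega
    obtain ⟨m, hm⟩ := he
    refine ⟨m, ?_⟩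
    show kc ^ m = z
    rw [kc_zpow]
    ext
    · simp [hl, ← map_zpow]
    · simp only [right_inr]
      rw [← ofAdd_toAdd z.right, hm]
      congr 1
      ring
  · rintro ⟨k, rfl⟩
    exact (Subgroup.center KModel).zpow_mem kc_mem_center k

end KleinAux2

noncomputable section KleinAux3
open Multiplicative SemidirectProduct

def kA : KModel := ⟨ofAdd 1, ofAdd 1⟩
def kB : KModel := ⟨1, ofAdd (-1)⟩

lemma kAABB : kA * kA * kB * kB = 1 := by
  ext
  · simp [kA, kB, kPhi_apply, Int.even_iff]
  · simp [kA, kB]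

lemma hrelF : ∀ r ∈ kleinRels, FreeGroup.lift ![kA, kB] r = 1 := by
  intro r hr
  rw [kleinRels, Set.mem_singleton_iff] at hr
  subst hr
  simpa using kAABB

def kf : KleinGroup →* KModel := PresentedGroup.toGroup hrelF

def ka : KleinGroup := PresentedGroup.of 0
def kb : KleinGroup := PresentedGroup.of 1

lemma krel : ka * ka * kb * kb = 1 := by
  have h : PresentedGroup.mk kleinRels
      (FreeGroup.of 0 * FreeGroup.of 0 * FreeGroup.of 1 * FreeGroup.of 1) = 1 :=
    (QuotientGroup.eq_one_iff _).2
      (Subgroup.subset_normalClosure (by simp [kleinRels]))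
  simpa [ka, kb, PresentedGroup.of, map_mul] using h

lemma kkey : kb⁻¹ * (ka * kb) * kb = (ka * kb)⁻¹ := by
  have h1 : ka * (kb * kb) = ka⁻¹ := by
    rw [← mul_one ka⁻¹, ← krel]; group
  rw [show kb⁻¹ * (ka * kb) * kb = kb⁻¹ * (ka * (kb * kb)) by group, h1]
  group

lemma kkeyinv : kb⁻¹ * (ka * kb)⁻¹ * kb = ka * kb := by
  calc kb⁻¹ * (ka * kb)⁻¹ * kb = (kb⁻¹ * (ka * kb) * kb)⁻¹ := by group
    _ = (ka * kb)⁻¹⁻¹ := by rw [kkey]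
    _ = ka * kb := by group

lemma khcomm : Commute (ka * kb) (kb * kb) := by
  have h : kb⁻¹ * (kb⁻¹ * (ka * kb) * kb) * kb = ka * kb := by
    rw [kkey]; exact kkeyinv
  calc (ka * kb) * (kb * kb)
      = (kb * kb) * (kb⁻¹ * (kb⁻¹ * (ka * kb) * kb) * kb) := by group
    _ = (kb * kb) * (ka * kb) := by rw [h]

lemma kconj_zpow (k : ℤ) : kb⁻¹ * (ka * kb) ^ k * kb = ((ka * kb) ^ k)⁻¹ := by
  have h := map_zpow (MulAut.conj kb⁻¹).toMonoidHom (ka * kb) k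
  simp only [MulEquiv.coe_toMonoidHom, MulAut.conj_apply, inv_inv] at h
  rw [h, kkey, inv_zpow]

lemma kconj_even (m k : ℤ) :
    (kb * kb) ^ m * (ka * kb) ^ k * ((kb * kb) ^ m)⁻¹ = (ka * kb) ^ k := by
  have h := (khcomm.symm.zpow_zpow m k)
  rw [h.eq, mul_inv_cancel_right]

lemma kconj_pow (n k : ℤ) :
    (kb⁻¹) ^ n * (ka * kb) ^ k * ((kb⁻¹) ^ n)⁻¹ =
      if Even n then (ka * kb) ^ k else (ka * kb) ^ (-k) := by
  rcases Int.even_or_odd n with ⟨m, hm⟩ | ⟨m, hm⟩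
  · rw [if_pos ⟨m, hm⟩]
    have hb : (kb⁻¹) ^ n = (kb * kb) ^ (-m) := by
      rw [hm, show kb * kb = kb ^ (2:ℤ) from (zpow_two kb).symm, ← zpow_mul, inv_zpow']
      congr 1; ring
    rw [hb]
    exact kconj_even (-m) k
  · rw [if_neg (by rw [hm]; exact Int.not_even_iff_odd.2 ⟨m, rfl⟩)]
    have hb : (kb⁻¹) ^ n = (kb * kb) ^ (-m) * kb⁻¹ := by
      rw [hm, show kb * kb = kb ^ (2:ℤ) from (zpow_two kb).symm, ← zpow_mul, inv_zpow',
        show kb⁻¹ = kb ^ (-1:ℤ) from (zpow_neg_one kb).symm, ← zpow_add]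
      congr 1; ring
    rw [hb]
    calc (kb * kb) ^ (-m) * kb⁻¹ * (ka * kb) ^ k * ((kb * kb) ^ (-m) * kb⁻¹)⁻¹
        = (kb * kb) ^ (-m) * (kb⁻¹ * (ka * kb) ^ k * kb) * ((kb * kb) ^ (-m))⁻¹ := by group
      _ = (kb * kb) ^ (-m) * ((ka * kb) ^ k)⁻¹ * ((kb * kb) ^ (-m))⁻¹ := by
            rw [kconj_zpow]
      _ = (ka * kb) ^ (-k) := by rw [← zpow_neg]; exact kconj_even (-m) (-k)

lemma khcomp : ∀ g : Multiplicative ℤ,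
    (zpowersHom KleinGroup (ka * kb)).comp (kPhi g).toMonoidHom =
      (MulAut.conj ((zpowersHom KleinGroup kb⁻¹) g)).toMonoidHom.comp
        (zpowersHom KleinGroup (ka * kb)) := by
  intro g
  apply MonoidHom.ext
  intro m
  simp only [MonoidHom.comp_apply, MulEquiv.coe_toMonoidHom, MulAut.conj_apply,
    zpowersHom_apply, kPhi_apply]
  rw [kconj_pow]
  rcases em (Even g.toAdd) with he | he
  · rw [if_pos he, if_pos he]
  · rw [if_neg he, if_neg he]
    simp

def kg : KModel →* KleinGroup :=
  SemidirectProduct.lift (zpowersHom KleinGroup (ka * kb)) (zpowersHom KleinGroup kb⁻¹) khcomp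

end KleinAux3

noncomputable section KleinAux4
open Multiplicative SemidirectProduct

lemma kf_ka : kf ka = kA := by
  rw [ka, kf, PresentedGroup.toGroup.of]
  simp

lemma kf_kb : kf kb = kB := by
  rw [kb, kf, PresentedGroup.toGroup.of]
  simp

lemma kgf : kg.comp kf = MonoidHom.id KleinGroup := by
  apply PresentedGroup.ext
  intro x
  fin_cases x
  · show kg (kf ka) = ka
    rw [kf_ka, kA, mk_eq_inl_mul_inr, map_mul, kg, lift_inl, lift_inr,
      zpowersHom_apply, zpowersHom_apply]
    simp only [toAdd_ofAdd, toAdd_one, zpow_zero, zpow_one, one_mul]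
    group
  · show kg (kf kb) = kb
    rw [kf_kb, kB, mk_eq_inl_mul_inr, map_mul, kg, lift_inl, lift_inr,
      zpowersHom_apply, zpowersHom_apply]
    simp only [toAdd_ofAdd, toAdd_one, zpow_zero, zpow_one, one_mul]
    group

lemma kfg : kf.comp kg = MonoidHom.id KModel := by
  apply SemidirectProduct.hom_ext
  · apply MonoidHom.ext_mint
    show kf (kg (inl (ofAdd 1))) = inl (ofAdd 1)
    rw [kg, lift_inl, zpowersHom_apply, toAdd_ofAdd, zpow_one, map_mul, kf_ka, kf_kb]
    ext
    · simp [kA, kB, kPhi_apply, Int.even_iff]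
    · simp [kA, kB]
  · apply MonoidHom.ext_mint
    show kf (kg (inr (ofAdd 1))) = inr (ofAdd 1)
    rw [kg, lift_inr, zpowersHom_apply, toAdd_ofAdd, zpow_one, map_inv, kf_kb]
    ext
    · simp [kB, kPhi_apply, Int.even_iff]
    · simp [kB]

lemma kf_inj : Function.Injective kf := by
  intro x y h
  have hx := DFunLike.congr_fun kgf x
  have hy := DFunLike.congr_fun kgf y
  simp only [MonoidHom.comp_apply, MonoidHom.id_apply] at hx hy
  rw [← hx, ← hy, h]

lemma kf_surj : Function.Surjective kf := fun w =>
  ⟨kg w, by simpa using DFunLike.congr_fun kfg w⟩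

lemma kf_ka2 : kf (ka ^ 2) = kc := by
  rw [map_pow, kf_ka]
  ext
  · simp [kA, kc, sq, kPhi_apply, Int.even_iff]
  · simp [kA, kc, sq]

lemma part1 : Subgroup.center KleinGroup = Subgroup.zpowers (ka ^ 2) := by
  ext z
  constructor
  · intro hz
    have h1 : kf z ∈ Subgroup.center KModel := by
      rw [Subgroup.mem_center_iff]
      intro w
      obtain ⟨u, rfl⟩ := kf_surj w
      rw [← map_mul, ← map_mul, Subgroup.mem_center_iff.1 hz u]
    rw [center_KModel] at h1
    obtain ⟨k, hk⟩ := h1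
    rw [Subgroup.mem_zpowers_iff]
    refine ⟨k, kf_inj ?_⟩
    rw [map_zpow, kf_ka2]
    exact hk
  · intro hz
    rw [Subgroup.mem_zpowers_iff] at hz
    obtain ⟨k, rfl⟩ := hz
    rw [Subgroup.mem_center_iff]
    intro g
    apply kf_inj
    have hcen : kc ^ k ∈ Subgroup.center KModel :=
      (Subgroup.center KModel).zpow_mem kc_mem_center k
    rw [map_mul, map_mul, map_zpow, kf_ka2]
    exact Subgroup.mem_center_iff.1 hcen (kf g)

def kpsi : Multiplicative ℤ →* KleinGroup := zpowersHom KleinGroup (ka ^ 2)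

lemma kpsi_range : kpsi.range = Subgroup.zpowers (ka ^ 2) := by
  ext x
  rw [MonoidHom.mem_range, Subgroup.mem_zpowers_iff]
  constructor
  · rintro ⟨m, rfl⟩
    exact ⟨m.toAdd, rfl⟩
  · rintro ⟨k, rfl⟩
    exact ⟨ofAdd k, rfl⟩

lemma kpsi_inj : Function.Injective kpsi := by
  intro m m' h
  have h1 := congrArg kf h
  rw [kpsi, zpowersHom_apply, zpowersHom_apply, map_zpow, map_zpow, kf_ka2,
    kc_zpow, kc_zpow] at h1
  have h2 := congrArg (fun w : KModel => w.right.toAdd) h1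
  simp only [right_inr, toAdd_ofAdd] at h2
  have h3 : m.toAdd = m'.toAdd := by omega
  exact Multiplicative.toAdd.injective h3

end KleinAux4

/-- a² generates the center of the Klein bottle group, and the center is infinite cyclic. -/
theorem stmt17 :
    Subgroup.center KleinGroup =
      Subgroup.zpowers (PresentedGroup.of 0 ^ 2 : KleinGroup) ∧
    Nonempty (Subgroup.center KleinGroup ≃* Multiplicative ℤ) := by
  refine ⟨part1, ⟨?_⟩⟩
  exact (MulEquiv.subgroupCongr (part1.trans kpsi_range.symm)).trans
    (MonoidHom.ofInjective kpsi_inj).symm
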